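/- Let s > 0 be a real number and t a real number. Then for every n ≥ 0, det((s·t^{i+j}/(i+j+s))_{i,j=0}^{n}) = s^n · t^{n²+n} / ∏_{j=1}^{n} ((2j+s) · C(2j+s−1, j)²), where for real x the generalized binomial coefficient is C(x,m) = x(x−1)⋯(x−m+1)/m!. -/

import Mathlib

/-- Generalized binomial coefficient `C(x,m) = x(x−1)⋯(x−m+1)/m!` for real `x`. -/
noncomputable def genChoose (x : ℝ) (m : ℕ) : ℝ :=
  (∏ i ∈ Finset.range m, (x - (i : ℝ))) / (m.factorial : ℝ)

theorem cauchy_det : ∀ (n : ℕ) (x y : Fin n → ℝ), (∀ i j, x i + y j ≠ 0) →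
    Matrix.det (Matrix.of fun i j => (x i + y j)⁻¹) =
      (∏ i : Fin n, ∏ j ∈ Finset.Ioi i, ((x j - x i) * (y j - y i))) /
        ∏ i : Fin n, ∏ j : Fin n, (x i + y j) := by
  intro n
  induction n with
  | zero =>
    intro x y _
    simp [Matrix.det_fin_zero]
  | succ n ih =>
    intro x y h
    have h00 : x 0 + y 0 ≠ 0 := h 0 0
    -- Step A: row operations
    set B : Matrix (Fin (n+1)) (Fin (n+1)) ℝ := Matrix.of fun i j =>
      (Fin.cons (fun j : Fin (n+1) => (x 0 + y j)⁻¹)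
        (fun i' (j : Fin (n+1)) =>
          (x i'.succ + y j)⁻¹ - (x i'.succ + y 0)⁻¹ * (x 0 + y 0) * (x 0 + y j)⁻¹)
        : Fin (n+1) → Fin (n+1) → ℝ) i j with hB
    have stepA : Matrix.det (Matrix.of fun i j => (x i + y j)⁻¹) = Matrix.det B := by
      apply Matrix.det_eq_of_forall_row_eq_smul_add_const
        (Fin.cons 0 fun i : Fin n => (x i.succ + y 0)⁻¹ * (x 0 + y 0)) 0 (Fin.cons_zero _ _)
      intro i j
      refine Fin.cases ?_ (fun i => ?_) i
      · simp [hB]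
      · simp only [hB, Matrix.of_apply, Fin.cons_succ, Fin.cons_zero]
        ring
    -- column 0 entries below the top are zero
    have hB0 : ∀ i : Fin n, B i.succ 0 = 0 := by
      intro i
      simp only [hB, Matrix.of_apply, Fin.cons_succ]
      rw [mul_assoc, mul_inv_cancel₀ h00, mul_one, sub_self]
    have hB00 : B 0 0 = (x 0 + y 0)⁻¹ := by simp [hB]
    -- Step B: expand along column 0
    have stepB : Matrix.det B = (x 0 + y 0)⁻¹ * Matrix.det (B.submatrix Fin.succ Fin.succ) := by
      rw [Matrix.det_succ_column_zero, Fin.sum_univ_succ]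
      simp [hB0, hB00, Fin.succAbove_zero]
    -- Step C: the submatrix is a scaled Cauchy matrix
    have stepC : B.submatrix Fin.succ Fin.succ =
        Matrix.of fun i j : Fin n =>
          ((x i.succ - x 0) * (x i.succ + y 0)⁻¹) *
            (((y j.succ - y 0) * (x 0 + y j.succ)⁻¹) * (x i.succ + y j.succ)⁻¹) := by
      ext i j
      simp only [Matrix.submatrix_apply, hB, Matrix.of_apply, Fin.cons_succ]
      have h1 := h i.succ j.succ
      have h2 := h i.succ 0
      have h3 := h 0 j.succ
      field_simp
      ring
    have stepC' : Matrix.det (B.submatrix Fin.succ Fin.succ) =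
        (∏ i : Fin n, (x i.succ - x 0) * (x i.succ + y 0)⁻¹) *
          ((∏ j : Fin n, (y j.succ - y 0) * (x 0 + y j.succ)⁻¹) *
            Matrix.det (Matrix.of fun i j : Fin n => (x i.succ + y j.succ)⁻¹)) := by
      rw [stepC]
      refine (Matrix.det_mul_column (fun i : Fin n => (x i.succ - x 0) * (x i.succ + y 0)⁻¹)
        (Matrix.of fun i j : Fin n =>
          ((y j.succ - y 0) * (x 0 + y j.succ)⁻¹) * (x i.succ + y j.succ)⁻¹)).trans ?_
      congr 1
      exact Matrix.det_mul_row (fun k : Fin n => (y k.succ - y 0) * (x 0 + y k.succ)⁻¹)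
        (Matrix.of fun i j : Fin n => (x i.succ + y j.succ)⁻¹)
    -- induction hypothesis
    have ihr := ih (fun i => x i.succ) (fun j => y j.succ) (fun i j => h i.succ j.succ)
    rw [stepA, stepB, stepC', ihr]
    -- Step D: algebra
    -- nonzeroness
    have hD1 : (∏ i : Fin n, (x i.succ + y 0)) ≠ 0 :=
      Finset.prod_ne_zero_iff.2 fun i _ => h i.succ 0
    have hD2 : (∏ j : Fin n, (x 0 + y j.succ)) ≠ 0 :=
      Finset.prod_ne_zero_iff.2 fun j _ => h 0 j.succ
    have hQ' : (∏ i : Fin n, ∏ j : Fin n, (x i.succ + y j.succ)) ≠ 0 :=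
      Finset.prod_ne_zero_iff.2 fun i _ => Finset.prod_ne_zero_iff.2 fun j _ => h i.succ j.succ
    -- decompose the RHS products
    have hP : (∏ i : Fin (n+1), ∏ j ∈ Finset.Ioi i, ((x j - x i) * (y j - y i))) =
        (∏ j : Fin n, ((x j.succ - x 0) * (y j.succ - y 0))) *
          ∏ i : Fin n, ∏ j ∈ Finset.Ioi i, ((x j.succ - x i.succ) * (y j.succ - y i.succ)) := by
      rw [Fin.prod_univ_succ, Fin.prod_Ioi_zero]
      congr 1
      exact Finset.prod_congr rfl fun i _ => Fin.prod_Ioi_succ _ i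
    have hQ : (∏ i : Fin (n+1), ∏ j : Fin (n+1), (x i + y j)) =
        ((x 0 + y 0) * ∏ j : Fin n, (x 0 + y j.succ)) *
          ((∏ i : Fin n, (x i.succ + y 0)) * ∏ i : Fin n, ∏ j : Fin n, (x i.succ + y j.succ)) := by
      rw [Fin.prod_univ_succ, Fin.prod_univ_succ]
      congr 1
      rw [← Finset.prod_mul_distrib]
      exact Finset.prod_congr rfl fun i _ => Fin.prod_univ_succ _
    rw [hP, hQ, Finset.prod_mul_distrib, Finset.prod_mul_distrib, Finset.prod_mul_distrib,
      Finset.prod_inv_distrib, Finset.prod_inv_distrib]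
    field_simp


theorem key (s : ℝ) : ∀ n : ℕ,
    (∏ i : Fin (n+1), ∏ j : Fin (n+1), ((i : ℝ) + (j : ℝ) + s)) =
      s * (∏ i : Fin (n+1), ∏ j ∈ Finset.Ioi i, (((j : ℝ) - (i : ℝ)) * ((j : ℝ) - (i : ℝ)))) *
        ∏ j ∈ Finset.Icc 1 n, ((2 * (j : ℝ) + s) * (genChoose (2 * (j : ℝ) + s - 1) j) ^ 2) := by
  intro n
  induction n with
  | zero => simp
  | succ n IH =>
    set A : ℝ := ∏ i ∈ Finset.range (n+1), (((n : ℝ) + 1) + (i : ℝ) + s) with hA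
    have hfac : ((n+1).factorial : ℝ) ≠ 0 := by positivity
    -- (a) split the big double product
    have hF : (∏ i : Fin (n+2), ∏ j : Fin (n+2), ((i : ℝ) + (j : ℝ) + s)) =
        (∏ i : Fin (n+1), ∏ j : Fin (n+1), ((i : ℝ) + (j : ℝ) + s)) *
          ((∏ i : Fin (n+1), ((i : ℝ) + ((n : ℝ) + 1) + s)) *
            ∏ j : Fin (n+2), (((n : ℝ) + 1) + (j : ℝ) + s)) := by
      rw [Fin.prod_univ_castSucc]
      have hrow : ∀ i : Fin (n+1), (∏ j : Fin (n+2), (((i.castSucc : Fin (n+2)) : ℝ) + (j : ℝ) + s))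
          = (∏ j : Fin (n+1), ((i : ℝ) + (j : ℝ) + s)) * ((i : ℝ) + ((n : ℝ) + 1) + s) := by
        intro i
        rw [Fin.prod_univ_castSucc]
        simp only [Fin.coe_castSucc, Fin.val_last]
        push_cast
        ring
      rw [Finset.prod_congr rfl fun i _ => hrow i, Finset.prod_mul_distrib]
      simp only [Fin.val_last]
      push_cast
      ring
    -- (b) split the pair product
    have hV : (∏ i : Fin (n+2), ∏ j ∈ Finset.Ioi i, (((j : ℝ) - (i : ℝ)) * ((j : ℝ) - (i : ℝ)))) =
        (∏ j : Fin (n+1), (((j : ℝ) + 1) * ((j : ℝ) + 1))) *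
          ∏ i : Fin (n+1), ∏ j ∈ Finset.Ioi i, (((j : ℝ) - (i : ℝ)) * ((j : ℝ) - (i : ℝ))) := by
      rw [Fin.prod_univ_succ, Fin.prod_Ioi_zero]
      congr 1
      · refine Finset.prod_congr rfl fun j _ => ?_
        simp only [Fin.val_succ, Fin.val_zero]
        push_cast
        ring
      · refine Finset.prod_congr rfl fun i _ => ?_
        rw [Fin.prod_Ioi_succ]
        refine Finset.prod_congr rfl fun j _ => ?_
        simp only [Fin.val_succ]
        push_cast
        ring
    -- (c) split the Icc product
    have hW : (∏ j ∈ Finset.Icc 1 (n+1), ((2 * (j : ℝ) + s) * (genChoose (2 * (j : ℝ) + s - 1) j) ^ 2)) =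
        (∏ j ∈ Finset.Icc 1 n, ((2 * (j : ℝ) + s) * (genChoose (2 * (j : ℝ) + s - 1) j) ^ 2)) *
          ((2 * ((n : ℝ) + 1) + s) * (genChoose (2 * ((n : ℝ) + 1) + s - 1) (n+1)) ^ 2) := by
      rw [Finset.prod_Icc_succ_top (Nat.le_add_left 1 n)]
      push_cast
      ring
    -- (d) genChoose value
    have hgc : genChoose (2 * ((n : ℝ) + 1) + s - 1) (n+1) = A / ((n+1).factorial : ℝ) := by
      unfold genChoose
      congr 1
      rw [hA, ← Finset.prod_range_reflect]
      refine Finset.prod_congr rfl fun i hi => ?_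
      have hin : i ≤ n := Nat.lt_succ_iff.mp (Finset.mem_range.mp hi)
      rw [show n + 1 - 1 - i = n - i from rfl]
      push_cast [Nat.cast_sub hin]
      ring
    -- (e) the two extra products both relate to A
    have hP1 : (∏ i : Fin (n+1), ((i : ℝ) + ((n : ℝ) + 1) + s)) = A := by
      rw [hA, ← Fin.prod_univ_eq_prod_range]
      exact Finset.prod_congr rfl fun i _ => by ring
    have hP2 : (∏ j : Fin (n+2), (((n : ℝ) + 1) + (j : ℝ) + s)) = A * (2 * ((n : ℝ) + 1) + s) := by
      rw [Fin.prod_univ_castSucc, hA, ← Fin.prod_univ_eq_prod_range]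
      simp only [Fin.coe_castSucc, Fin.val_last]
      push_cast
      ring
    -- (f) factorial product
    have hfp : (∏ j : Fin (n+1), (((j : ℝ) + 1) * ((j : ℝ) + 1))) =
        ((n+1).factorial : ℝ) * ((n+1).factorial : ℝ) := by
      have h1 : (∏ j ∈ Finset.range (n+1), ((j : ℝ) + 1)) = ((n+1).factorial : ℝ) := by
        rw [← Finset.prod_range_add_one_eq_factorial (n+1)]
        push_cast
        rfl
      rw [Finset.prod_mul_distrib,
        show (∏ x : Fin (n+1), ((x : ℝ) + 1)) = ∏ j ∈ Finset.range (n+1), ((j : ℝ) + 1) from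
          Fin.prod_univ_eq_prod_range (fun k : ℕ => (k : ℝ) + 1) (n+1), h1]
    rw [hF, hV, hW, hgc, hP1, hP2, hfp, IH]
    field_simp


/-- For `s > 0`,
`det((s·t^{i+j}/(i+j+s))_{i,j=0}^n) = s^n·t^{n²+n} / ∏_{j=1}^n ((2j+s)·C(2j+s−1,j)²)`. -/
theorem det_generalized_hilbert (s t : ℝ) (hs : 0 < s) (n : ℕ) :
    Matrix.det (Matrix.of fun i j : Fin (n + 1) =>
        s * t ^ ((i : ℕ) + (j : ℕ)) / (((i : ℕ) + (j : ℕ) : ℕ) + s)) =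
      s ^ n * t ^ (n ^ 2 + n) /
        ∏ j ∈ Finset.Icc 1 n, ((2 * (j : ℝ) + s) * (genChoose (2 * (j : ℝ) + s - 1) j) ^ 2) := by
  have hxy : ∀ i j : Fin (n+1), ((i : ℕ) : ℝ) + (((j : ℕ) : ℝ) + s) ≠ 0 := by
    intro i j
    positivity
  -- Step 1: factor the matrix
  have hM : (Matrix.of fun i j : Fin (n + 1) =>
        s * t ^ ((i : ℕ) + (j : ℕ)) / (((i : ℕ) + (j : ℕ) : ℕ) + s)) =
      Matrix.of fun i j : Fin (n + 1) =>
        t ^ (i : ℕ) * (t ^ (j : ℕ) *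
          (s * (((i : ℕ) : ℝ) + (((j : ℕ) : ℝ) + s))⁻¹)) := by
    ext i j
    simp only [Matrix.of_apply]
    rw [div_eq_mul_inv, pow_add]
    push_cast
    ring_nf
  rw [hM]
  -- Step 2: pull out the powers of t
  rw [show (Matrix.of fun i j : Fin (n + 1) =>
        t ^ (i : ℕ) * (t ^ (j : ℕ) * (s * (((i : ℕ) : ℝ) + (((j : ℕ) : ℝ) + s))⁻¹))) =
      Matrix.of fun i j : Fin (n + 1) =>
        (fun k : Fin (n+1) => t ^ (k : ℕ)) i *
          (Matrix.of fun i j : Fin (n + 1) =>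
            t ^ (j : ℕ) * (s * (((i : ℕ) : ℝ) + (((j : ℕ) : ℝ) + s))⁻¹)) i j from rfl,
    Matrix.det_mul_column]
  rw [show (Matrix.of fun i j : Fin (n + 1) =>
        t ^ (j : ℕ) * (s * (((i : ℕ) : ℝ) + (((j : ℕ) : ℝ) + s))⁻¹)) =
      Matrix.of fun i j : Fin (n + 1) =>
        (fun k : Fin (n+1) => t ^ (k : ℕ)) j *
          (Matrix.of fun i j : Fin (n + 1) =>
            s * (((i : ℕ) : ℝ) + (((j : ℕ) : ℝ) + s))⁻¹) i j from rfl,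
    Matrix.det_mul_row]
  -- Step 3: pull out s
  have hsmul : (Matrix.of fun i j : Fin (n + 1) =>
        s * (((i : ℕ) : ℝ) + (((j : ℕ) : ℝ) + s))⁻¹) =
      s • Matrix.of fun i j : Fin (n + 1) => (((i : ℕ) : ℝ) + (((j : ℕ) : ℝ) + s))⁻¹ := by
    ext i j
    simp [Matrix.smul_apply]
  rw [hsmul, Matrix.det_smul]
  -- Step 4: Cauchy determinant
  rw [cauchy_det (n+1) (fun i => ((i : ℕ) : ℝ)) (fun j => ((j : ℕ) : ℝ) + s) hxy]
  -- powers of t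
  have hprodt : (∏ i : Fin (n+1), t ^ (i : ℕ)) * (∏ i : Fin (n+1), t ^ (i : ℕ)) =
      t ^ (n ^ 2 + n) := by
    rw [Finset.prod_pow_eq_pow_sum, ← pow_add]
    congr 1
    have h2 : (∑ i ∈ Finset.range (n+1), i) * 2 = (n+1) * n := Finset.sum_range_id_mul_two (n+1)
    have h3 : (∑ i : Fin (n+1), (i : ℕ)) = ∑ i ∈ Finset.range (n+1), i :=
      Fin.sum_univ_eq_sum_range (fun k => k) (n+1)
    have h4 : n ^ 2 + n = (n + 1) * n := by ring
    omega
  -- rewrite the Cauchy products into the `key` form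
  have hVeq : (∏ i : Fin (n+1), ∏ j ∈ Finset.Ioi i,
        ((((j : ℕ) : ℝ) - ((i : ℕ) : ℝ)) * ((((j : ℕ) : ℝ) + s) - (((i : ℕ) : ℝ) + s)))) =
      ∏ i : Fin (n+1), ∏ j ∈ Finset.Ioi i,
        ((((j : ℕ) : ℝ) - ((i : ℕ) : ℝ)) * (((j : ℕ) : ℝ) - ((i : ℕ) : ℝ))) := by
    refine Finset.prod_congr rfl fun i _ => Finset.prod_congr rfl fun j _ => by ring
  have hQeq : (∏ i : Fin (n+1), ∏ j : Fin (n+1), (((i : ℕ) : ℝ) + (((j : ℕ) : ℝ) + s))) =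
      ∏ i : Fin (n+1), ∏ j : Fin (n+1), (((i : ℕ) : ℝ) + ((j : ℕ) : ℝ) + s) := by
    refine Finset.prod_congr rfl fun i _ => Finset.prod_congr rfl fun j _ => by ring
  rw [hVeq, hQeq, key s n]
  -- final algebra
  set V : ℝ := ∏ i : Fin (n+1), ∏ j ∈ Finset.Ioi i,
    ((((j : ℕ) : ℝ) - ((i : ℕ) : ℝ)) * (((j : ℕ) : ℝ) - ((i : ℕ) : ℝ))) with hV
  set W : ℝ := ∏ j ∈ Finset.Icc 1 n,
    ((2 * (j : ℝ) + s) * (genChoose (2 * (j : ℝ) + s - 1) j) ^ 2) with hW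
  have hVne : V ≠ 0 := by
    rw [hV]
    refine Finset.prod_ne_zero_iff.2 fun i _ => Finset.prod_ne_zero_iff.2 fun j hj => ?_
    have hij0 : i < j := Finset.mem_Ioi.mp hj
    have hij : (i : ℕ) < (j : ℕ) := hij0
    have : ((i : ℕ) : ℝ) < ((j : ℕ) : ℝ) := by exact_mod_cast hij
    have h0 : (((j : ℕ) : ℝ) - ((i : ℕ) : ℝ)) ≠ 0 := by linarith
    exact mul_ne_zero h0 h0
  have hWne : W ≠ 0 := by
    have hFne : (∏ i : Fin (n+1), ∏ j : Fin (n+1),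
        (((i : ℕ) : ℝ) + ((j : ℕ) : ℝ) + s)) ≠ 0 :=
      Finset.prod_ne_zero_iff.2 fun i _ => Finset.prod_ne_zero_iff.2 fun j _ => by positivity
    intro h0
    rw [key s n, ← hV, ← hW, h0, mul_zero] at hFne
    exact hFne rfl
  have hsne : s ≠ 0 := ne_of_gt hs
  rw [Fintype.card_fin]
  field_simp
  rw [← hprodt]
  ring
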